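/- (Persistence of a common FloodSet set.) Suppose the delivery pattern is consistent with the crash pattern. Let 1 ≤ m ≤ r and let W* be a finset of values such that every process p alive at the end of round m−1 satisfies W m p = W*. Then for every m' with m ≤ m' ≤ r, every process p alive at the end of round m'−1 satisfies W m' p = W*. -/
import Mathlib


open scoped Classical

/-- The FloodSet execution: `W 0 p = {init p}` and, for `t < r`,
`W (t+1) p = W t p ∪ ⋃ q, (if delivered t q p then W t q else ∅)`
(beyond round `r` the set is just carried along). -/
noncomputable def floodW {n r : ℕ} {V : Type} (init : Fin n → V)
    (delivered : Fin r → Fin n → Fin n → Prop) : ℕ → Fin n → Finset V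
  | 0, p => {init p}
  | t + 1, p =>
      if h : t < r then
        floodW init delivered t p ∪
          Finset.univ.biUnion fun q =>
            if delivered ⟨t, h⟩ q p then floodW init delivered t q else ∅
      else floodW init delivered t p

/-- Process `p` is alive at the end of round `t`. -/
def aliveAtEnd {n r : ℕ} (crash : Fin n → Option (Fin r)) (t : ℕ) (p : Fin n) : Prop :=
  crash p = none ∨ ∃ s : Fin r, crash p = some s ∧ t < s.val

/-- The delivery pattern is consistent with the crash pattern. -/
def consistentDel {n r : ℕ} (crash : Fin n → Option (Fin r))
    (delivered : Fin r → Fin n → Fin n → Prop) : Prop :=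
  (∀ (t : Fin r) (q p : Fin n),
      (crash q = none ∨ ∃ s : Fin r, crash q = some s ∧ t.val < s.val) → delivered t q p) ∧
  (∀ (t : Fin r) (q p : Fin n) (s : Fin r), crash q = some s → s.val < t.val →
      ¬ delivered t q p)

/-- Persistence of a common FloodSet set. -/
theorem stmt_7 (n r : ℕ) (hr : 1 ≤ r)
    (V : Type) [Fintype V] [Nonempty V] [LinearOrder V]
    (init : Fin n → V) (crash : Fin n → Option (Fin r))
    (delivered : Fin r → Fin n → Fin n → Prop)
    (hcons : consistentDel crash delivered)
    (m : ℕ) (hm1 : 1 ≤ m) (hmr : m ≤ r) (Wstar : Finset V)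
    (hW : ∀ p : Fin n, aliveAtEnd crash (m - 1) p → floodW init delivered m p = Wstar) :
    ∀ m' : ℕ, m ≤ m' → m' ≤ r →
      ∀ p : Fin n, aliveAtEnd crash (m' - 1) p → floodW init delivered m' p = Wstar := by
  intro m' hmm'
  induction m', hmm' using Nat.le_induction with
  | base => exact fun _ => hW
  | succ k hk ih =>
    intro hkr p hp
    have hkr' : k < r := hkr
    have hk1 : 0 < k := hm1.trans hk
    have alive_pred : ∀ q : Fin n, aliveAtEnd crash k q → aliveAtEnd crash (k - 1) q := by
      rintro q (h | ⟨s, hs, hlt⟩)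
      · exact Or.inl h
      · exact Or.inr ⟨s, hs, lt_of_le_of_lt (Nat.sub_le k 1) hlt⟩
    have hp' : aliveAtEnd crash (k - 1) p := alive_pred p hp
    have hq : ∀ q, delivered ⟨k, hkr'⟩ q p → floodW init delivered k q = Wstar := by
      intro q hd
      apply ih hkr'.le q
      rcases hcq : crash q with _ | s
      · exact Or.inl hcq
      · refine Or.inr ⟨s, hcq, ?_⟩
        by_contra hle
        push_neg at hle
        exact hcons.2 ⟨k, hkr'⟩ q p s hcq
          (lt_of_le_of_lt hle (Nat.sub_lt hk1 one_pos)) hd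
    have hWp := ih hkr'.le p hp'
    show floodW init delivered (k + 1) p = Wstar
    rw [floodW, dif_pos hkr']
    apply Finset.Subset.antisymm
    · intro x hx
      simp only [Finset.mem_union] at hx
      rcases hx with hx | hx
      · exact hWp ▸ hx
      simp only [Finset.mem_biUnion] at hx
      obtain ⟨q, -, hx⟩ := hx
      by_cases hd : delivered ⟨k, hkr'⟩ q p
      · rw [if_pos hd, hq q hd] at hx; exact hx
      · rw [if_neg hd] at hx; exact absurd hx (Finset.notMem_empty x)
    · intro x hx
      simp only [Finset.mem_union]
      exact Or.inl (hWp ▸ hx)
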